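/- arXiv:1106.5626 — 4 statements merged into one kernel-verified Lean document; each statement's English description precedes it below -/
import Mathlib

section
/- Fix an integer m ≥ 1, a nonempty subset C_r ⊆ {1,…,m}, and let Ω_r := diag(1_{C_r}) − (1/|C_r|) 1_{C_r} 1_{C_r}^T ∈ ℝ^{m×m}. Let M ∈ ℝ^{m×m} be symmetric positive definite, let P_r be the Moore–Penrose pseudoinverse of Ω_r M Ω_r, and set E_r := P_r M. Then: (i) the column space of E_r equals the column space of Ω_r; (ii) E_r² = E_r; (iii) E_r x = x for every x in the column space of Ω_r. -/
open Matrix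

/-- The centering matrix `Ω_C = diag(1_C) − (1/|C|) 1_C 1_Cᵀ` associated with a cluster `C`. -/
noncomputable def Omega {m : ℕ} (C : Finset (Fin m)) : Matrix (Fin m) (Fin m) ℝ :=
  Matrix.diagonal (fun i => if i ∈ C then (1 : ℝ) else 0) -
    (1 / (C.card : ℝ)) • Matrix.vecMulVec (fun i => if i ∈ C then (1 : ℝ) else 0)
      (fun i => if i ∈ C then (1 : ℝ) else 0)

/-- `P` is the Moore–Penrose pseudoinverse of `B`. -/
def IsMP {m : ℕ} (B P : Matrix (Fin m) (Fin m) ℝ) : Prop :=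
  B * P * B = B ∧ P * B * P = P ∧ (B * P)ᵀ = B * P ∧ (P * B)ᵀ = P * B

lemma matrix_ext_of_mulVec {m : ℕ} {A Q : Matrix (Fin m) (Fin m) ℝ}
    (h : ∀ x, A.mulVec x = Q.mulVec x) : A = Q := by
  ext i j
  have := congrFun (h (Pi.single j 1)) i
  simpa using this

lemma Omega_symm {m : ℕ} (C : Finset (Fin m)) : (Omega C)ᵀ = Omega C := by
  unfold Omega
  rw [transpose_sub, transpose_smul, diagonal_transpose]
  congr 1
  ext i j
  simp [vecMulVec_apply, mul_comm]

lemma Omega_idem {m : ℕ} (C : Finset (Fin m)) (hC : C.Nonempty) :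
    Omega C * Omega C = Omega C := by
  have hc : (C.card : ℝ) ≠ 0 := Nat.cast_ne_zero.mpr (Finset.card_pos.mpr hC).ne'
  set u : Fin m → ℝ := fun i => if i ∈ C then (1 : ℝ) else 0 with hu
  have hu2 : ∀ i, u i * u i = u i := by intro i; by_cases h : i ∈ C <;> simp [hu, h]
  have hsum : ∑ k, u k * u k = (C.card : ℝ) := by
    simp only [hu2]
    simp [hu, Finset.sum_ite_mem, Finset.univ_inter]
  have hDD : diagonal u * diagonal u = diagonal u := by
    rw [diagonal_mul_diagonal, show (fun i => u i * u i) = u from funext hu2]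
  have hDV : diagonal u * vecMulVec u u = vecMulVec u u := by
    ext i j; rw [diagonal_mul, vecMulVec_apply, ← mul_assoc, hu2]
  have hVD : vecMulVec u u * diagonal u = vecMulVec u u := by
    ext i j; rw [mul_diagonal, vecMulVec_apply, mul_assoc, hu2]
  have hVV : vecMulVec u u * vecMulVec u u = (C.card : ℝ) • vecMulVec u u := by
    ext i j
    rw [Matrix.mul_apply, Matrix.smul_apply, vecMulVec_apply, smul_eq_mul]
    calc ∑ k, vecMulVec u u i k * vecMulVec u u k j
        = (u i * u j) * ∑ k, u k * u k := by
          rw [Finset.mul_sum]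
          exact Finset.sum_congr rfl (fun k _ => by rw [vecMulVec_apply, vecMulVec_apply]; ring)
      _ = (C.card : ℝ) * (u i * u j) := by rw [hsum]; ring
  have key : Omega C = diagonal u - (1 / (C.card : ℝ)) • vecMulVec u u := rfl
  rw [key, Matrix.sub_mul, Matrix.mul_sub, Matrix.mul_sub, Matrix.smul_mul, Matrix.smul_mul,
    Matrix.mul_smul, Matrix.mul_smul, hDD, hDV, hVD, hVV, smul_smul, smul_smul]
  have hs : 1 / (C.card : ℝ) * (1 / (C.card : ℝ)) * (C.card : ℝ) = 1 / (C.card : ℝ) := by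
    field_simp
  rw [hs]
  abel

/-- Two symmetric idempotent real matrices with the same kernel are equal. -/
lemma proj_eq {m : ℕ} {A Q : Matrix (Fin m) (Fin m) ℝ}
    (hAA : A * A = A) (hQQ : Q * Q = Q) (hA : Aᵀ = A) (hQ : Qᵀ = Q)
    (hker : ∀ x, A.mulVec x = 0 ↔ Q.mulVec x = 0) : A = Q := by
  have h1 : A * Q = A := by
    apply matrix_ext_of_mulVec
    intro x
    have hq : Q.mulVec (x - Q.mulVec x) = 0 := by
      rw [Matrix.mulVec_sub, Matrix.mulVec_mulVec, hQQ, sub_self]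
    have := (hker _).mpr hq
    rw [Matrix.mulVec_sub, Matrix.mulVec_mulVec, sub_eq_zero] at this
    rw [← this]
  have h2 : Q * A = Q := by
    apply matrix_ext_of_mulVec
    intro x
    have ha : A.mulVec (x - A.mulVec x) = 0 := by
      rw [Matrix.mulVec_sub, Matrix.mulVec_mulVec, hAA, sub_self]
    have := (hker _).mp ha
    rw [Matrix.mulVec_sub, Matrix.mulVec_mulVec, sub_eq_zero] at this
    rw [← this]
  calc A = Aᵀ := hA.symm
    _ = (A * Q)ᵀ := by rw [h1]
    _ = Qᵀ * Aᵀ := by rw [Matrix.transpose_mul]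
    _ = Q * A := by rw [hA, hQ]
    _ = Q := h2

/-- The map `E_r = P_r M` satisfies: its column space equals the column space of
`Ω_r`, it is idempotent, and it fixes every vector in the column space of `Ω_r`. -/
theorem Er_projection_properties (m : ℕ) (hm : 1 ≤ m) (C : Finset (Fin m)) (hC : C.Nonempty)
    (M : Matrix (Fin m) (Fin m) ℝ) (hM : M.PosDef)
    (P : Matrix (Fin m) (Fin m) ℝ) (hP : IsMP (Omega C * M * Omega C) P)
    (E : Matrix (Fin m) (Fin m) ℝ) (hE : E = P * M) :
    -- (i)
    LinearMap.range E.mulVecLin = LinearMap.range (Omega C).mulVecLin ∧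
    -- (ii)
    E * E = E ∧
    -- (iii)
    (∀ x : Fin m → ℝ, x ∈ LinearMap.range (Omega C).mulVecLin → E.mulVec x = x) := by
  obtain ⟨h1, h2, h3, h4⟩ := hP
  set Ω := Omega C with hΩ
  set B := Ω * M * Ω with hB
  have hΩt : Ωᵀ = Ω := Omega_symm C
  have hΩi : Ω * Ω = Ω := Omega_idem C hC
  have hMt : Mᵀ = M := by
    rw [← Matrix.conjTranspose_eq_transpose_of_trivial]; exact hM.1.eq
  have hBt : Bᵀ = B := by
    rw [hB, Matrix.transpose_mul, Matrix.transpose_mul, hΩt, hMt, ← Matrix.mul_assoc]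
  -- kernel of B equals kernel of Ω
  have hkB : ∀ x, B.mulVec x = 0 ↔ Ω.mulVec x = 0 := by
    intro x
    constructor
    · intro h
      by_contra hne
      have hpos := hM.dotProduct_mulVec_pos (x := Ω.mulVec x) hne
      simp only [star_trivial] at hpos
      have hz : (Ω.mulVec x) ⬝ᵥ M.mulVec (Ω.mulVec x) = 0 := by
        have hx : x ⬝ᵥ B.mulVec x = 0 := by rw [h, dotProduct_zero]
        rw [hB, ← Matrix.mulVec_mulVec, ← Matrix.mulVec_mulVec, Matrix.dotProduct_mulVec,
          ← Matrix.mulVec_transpose, hΩt] at hx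
        exact hx
      rw [hz] at hpos
      exact lt_irrefl 0 hpos
    · intro h
      rw [hB, ← Matrix.mulVec_mulVec, ← Matrix.mulVec_mulVec, h, Matrix.mulVec_zero,
        Matrix.mulVec_zero]
  -- P * B = Ω
  have hPB : P * B = Ω := by
    apply proj_eq _ hΩi h4 hΩt
    · intro x
      constructor
      · intro h
        apply (hkB x).mp
        have : (B * (P * B)).mulVec x = 0 := by
          rw [← Matrix.mulVec_mulVec, h, Matrix.mulVec_zero]
        rwa [← Matrix.mul_assoc, h1] at this
      · intro h
        rw [← Matrix.mulVec_mulVec, (hkB x).mpr h, Matrix.mulVec_zero]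
    · calc P * B * (P * B) = (P * B * P) * B := by noncomm_ring
        _ = P * B := by rw [h2]
  -- Pᵀ * B = Ω, hence B * P = Ω
  have hBPtB : B * Pᵀ * B = B := by
    have := congrArg Matrix.transpose h1
    rw [Matrix.transpose_mul (B * P) B, Matrix.transpose_mul B P, hBt] at this
    rw [Matrix.mul_assoc]
    exact this
  have hPtB : Pᵀ * B = Ω := by
    apply proj_eq _ hΩi _ hΩt
    · intro x
      constructor
      · intro h
        apply (hkB x).mp
        have : (B * (Pᵀ * B)).mulVec x = 0 := by
          rw [← Matrix.mulVec_mulVec, h, Matrix.mulVec_zero]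
        rwa [← Matrix.mul_assoc, hBPtB] at this
      · intro h
        rw [← Matrix.mulVec_mulVec, (hkB x).mpr h, Matrix.mulVec_zero]
    · calc Pᵀ * B * (Pᵀ * B) = Pᵀ * (B * Pᵀ * B) := by noncomm_ring
        _ = Pᵀ * B := by rw [hBPtB]
    · rw [Matrix.transpose_mul, hBt, Matrix.transpose_transpose]
      rw [← h3, Matrix.transpose_mul, hBt]
  have hBP : B * P = Ω := by
    rw [← h3, Matrix.transpose_mul, hBt, hPtB]
  -- P = P Ω and P = Ω P
  have hPΩ : P * Ω = P := by rw [← hBP, ← Matrix.mul_assoc, h2]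
  have hΩP : Ω * P = P := by rw [← hPB]; rw [Matrix.mul_assoc, ← Matrix.mul_assoc]; rw [h2]
  -- E Ω = Ω
  have hEΩ : E * Ω = Ω := by
    rw [hE, Matrix.mul_assoc, ← hPΩ]
    calc P * Ω * (M * Ω) = P * (Ω * M * Ω) := by noncomm_ring
      _ = Ω := hPB
  have hΩE : Ω * E = E := by rw [hE, ← Matrix.mul_assoc, hΩP]
  refine ⟨?_, ?_, ?_⟩
  · apply le_antisymm
    · rw [← hΩE, Matrix.mulVecLin_mul]
      exact LinearMap.range_comp_le_range _ _
    · rw [← hEΩ, Matrix.mulVecLin_mul]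
      exact LinearMap.range_comp_le_range _ _
  · calc E * E = E * (Ω * E) := by rw [hΩE]
      _ = (E * Ω) * E := by rw [Matrix.mul_assoc]
      _ = Ω * E := by rw [hEΩ]
      _ = E := hΩE
  · rintro x ⟨y, rfl⟩
    have : E.mulVec (Ω.mulVec y) = (E * Ω).mulVec y := Matrix.mulVec_mulVec _ _ _
    rw [Matrix.mulVecLin_apply, this, hEΩ]
end

section
/- Fix integers m ≥ 1 and ℓ ≥ 1 and nonempty subsets (clusters) C_1, …, C_ℓ of {1,…,m}; for each r let Ω_r := diag(1_{C_r}) − (1/|C_r|) 1_{C_r} 1_{C_r}^T ∈ ℝ^{m×m}. Let M ∈ ℝ^{m×m} be symmetric positive definite, let P_r be the Moore–Penrose pseudoinverse of Ω_r M Ω_r, and set F_r := I − P_r M. Then the following are equivalent: (i) the only x ∈ ℝ^m with 1^T x = 0 satisfying F_r x = x for all r = 1, …, ℓ is x = 0; (ii) the sum of the column spaces of Ω_1, …, Ω_ℓ equals the hyperplane ker 1^T = {x ∈ ℝ^m : 1^T x = 0}. -/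
open Matrix

section aux
variable {m : ℕ}

lemma omega_transpose (C : Finset (Fin m)) : (Omega C)ᵀ = Omega C := by
  unfold Omega
  rw [transpose_sub, transpose_smul, diagonal_transpose]
  congr 1
  ext i j
  simp [vecMulVec_apply, mul_comm]

lemma indicator_sq (C : Finset (Fin m)) (i : Fin m) :
    (if i ∈ C then (1:ℝ) else 0) * (if i ∈ C then (1:ℝ) else 0)
      = (if i ∈ C then (1:ℝ) else 0) := by
  split_ifs <;> ring

lemma indicator_sum (C : Finset (Fin m)) :
    ∑ i, (if i ∈ C then (1:ℝ) else 0) = (C.card : ℝ) := by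
  simp [Finset.sum_boole]

lemma omega_mul_self (C : Finset (Fin m)) (hC : C.Nonempty) :
    Omega C * Omega C = Omega C := by
  have hn : (C.card : ℝ) ≠ 0 := Nat.cast_ne_zero.mpr (Finset.card_ne_zero.mpr hC)
  set c : Fin m → ℝ := fun i => if i ∈ C then 1 else 0 with hc
  set V : Matrix (Fin m) (Fin m) ℝ := vecMulVec c c with hV
  set s : ℝ := 1 / (C.card : ℝ) with hs
  have hcsq : ∀ k, c k * c k = c k := indicator_sq C
  have hdd : diagonal c * diagonal c = diagonal c := by
    rw [diagonal_mul_diagonal]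
    have : (fun i => c i * c i) = c := funext hcsq
    rw [this]
  have hdV : diagonal c * V = V := by
    ext i j
    rw [diagonal_mul]
    show c i * (c i * c j) = c i * c j
    rw [← mul_assoc, hcsq]
  have hVd : V * diagonal c = V := by
    ext i j
    rw [mul_diagonal]
    show c i * c j * c j = c i * c j
    rw [mul_assoc, hcsq]
  have hVV : V * V = (C.card : ℝ) • V := by
    ext i j
    rw [Matrix.smul_apply, mul_apply]
    simp only [hV, vecMulVec_apply, smul_eq_mul]
    have h1 : ∀ k : Fin m, (c i * c k) * (c k * c j) = (c i * c j) * c k := by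
      intro k
      have h2 : c k * c k = c k := indicator_sq C k
      calc (c i * c k) * (c k * c j) = (c i * c j) * (c k * c k) := by ring
        _ = (c i * c j) * c k := by rw [h2]
    rw [Finset.sum_congr rfl (fun k _ => h1 k), ← Finset.mul_sum, indicator_sum]
    ring
  have key : (diagonal c - s • V) * (diagonal c - s • V) = diagonal c - s • V := by
    rw [sub_mul, mul_sub, mul_sub, hdd, mul_smul_comm, smul_mul_assoc, smul_mul_assoc,
      mul_smul_comm, hdV, hVd, hVV, smul_smul, smul_smul]
    have hss : s * s * (C.card : ℝ) = s := by
      rw [hs]; field_simp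
    rw [hss]
    abel
  exact key

lemma omega_col_sum (C : Finset (Fin m)) (j : Fin m) :
    ∑ i, Omega C i j = 0 := by
  rcases Finset.eq_empty_or_nonempty C with h | h
  · subst h
    simp [Omega]
  have hn : (C.card : ℝ) ≠ 0 := Nat.cast_ne_zero.mpr (Finset.card_ne_zero.mpr h)
  unfold Omega
  simp only [Matrix.sub_apply, Matrix.smul_apply, vecMulVec_apply, smul_eq_mul, Finset.sum_sub_distrib]
  have h1 : ∑ i : Fin m, diagonal (fun i => if i ∈ C then (1:ℝ) else 0) i j
      = (if j ∈ C then (1:ℝ) else 0) := by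
    simp [diagonal_apply]
  have h2 : ∑ i : Fin m, 1 / (C.card : ℝ) * ((if i ∈ C then (1:ℝ) else 0) * (if j ∈ C then (1:ℝ) else 0))
      = (if j ∈ C then (1:ℝ) else 0) := by
    rw [← Finset.mul_sum, ← Finset.sum_mul, indicator_sum]
    field_simp
  rw [h1, h2, sub_self]

lemma omega_mulVec_sum (C : Finset (Fin m)) (y : Fin m → ℝ) :
    ∑ i, ((Omega C) *ᵥ y) i = 0 := by
  simp only [mulVec, dotProduct]
  rw [Finset.sum_comm]
  rw [Finset.sum_eq_zero]
  intro j _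
  rw [← Finset.sum_mul, omega_col_sum, zero_mul]

/-- dot product with a fixed vector on the right, as a linear map in the left argument. -/
noncomputable def dotLM {m : ℕ} (w : Fin m → ℝ) : (Fin m → ℝ) →ₗ[ℝ] ℝ where
  toFun s := s ⬝ᵥ w
  map_add' s t := add_dotProduct s t w
  map_smul' a s := smul_dotProduct a s w

end aux

/-- The only common fixed point of the maps `F_r = I − P_r M` in the hyperplane
`ker 1ᵀ` is `0`, if and only if the sum of the column spaces of the `Ω_r` equals `ker 1ᵀ`. -/
theorem fixed_points_iff_span (m ℓ : ℕ) (hm : 1 ≤ m) (hℓ : 1 ≤ ℓ)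
    (C : Fin ℓ → Finset (Fin m)) (hC : ∀ r, (C r).Nonempty)
    (M : Matrix (Fin m) (Fin m) ℝ) (hM : M.PosDef)
    (P : Fin ℓ → Matrix (Fin m) (Fin m) ℝ)
    (hP : ∀ r, IsMP (Omega (C r) * M * Omega (C r)) (P r))
    (F : Fin ℓ → Matrix (Fin m) (Fin m) ℝ) (hF : ∀ r, F r = 1 - P r * M) :
    (∀ x : Fin m → ℝ, (∑ i, x i = 0) → (∀ r, (F r).mulVec x = x) → x = 0) ↔
    (⨆ r, LinearMap.range (Omega (C r)).mulVecLin)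
      = LinearMap.ker (∑ i : Fin m, (LinearMap.proj i : (Fin m → ℝ) →ₗ[ℝ] ℝ)) := by
  classical
  set S := ⨆ r, LinearMap.range (Omega (C r)).mulVecLin with hS
  set f := ∑ i : Fin m, (LinearMap.proj i : (Fin m → ℝ) →ₗ[ℝ] ℝ) with hf
  have hfapp : ∀ x : Fin m → ℝ, f x = ∑ i, x i := by
    intro x
    rw [hf, LinearMap.sum_apply]
    rfl
  have hMt : Mᵀ = M := by
    ext i j
    show M j i = M i j
    have h := hM.1.apply j i
    rw [star_trivial] at h
    exact h.symm
  -- positive definiteness consequence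
  have hPD0 : ∀ w : Fin m → ℝ, w ⬝ᵥ (M *ᵥ w) = 0 → w = 0 := by
    intro w h
    by_contra hw
    have h2 := hM.dotProduct_mulVec_pos hw
    have hsw : star w = w := funext fun i => star_trivial _
    rw [hsw, h] at h2
    exact lt_irrefl 0 h2
  -- kernels of the pseudoinverses
  have key : ∀ r (v : Fin m → ℝ), (P r) *ᵥ v = 0 ↔ (Omega (C r)) *ᵥ v = 0 := by
    intro r v
    set Ω := Omega (C r) with hΩ
    set B := Ω * M * Ω with hB
    obtain ⟨h1, h2, h3, h4⟩ := hP r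
    have hΩt : Ωᵀ = Ω := omega_transpose _
    have hBt : Bᵀ = B := by
      rw [hB, transpose_mul, transpose_mul, hΩt, hMt, mul_assoc]
    have e1 : (P r)ᵀ * B = B * P r := by
      calc (P r)ᵀ * B = (P r)ᵀ * Bᵀ := by rw [hBt]
        _ = (B * P r)ᵀ := (transpose_mul _ _).symm
        _ = B * P r := h3
    have idA : P r * (P r)ᵀ * B = P r := by
      rw [mul_assoc, e1, ← mul_assoc, h2]
    have idB : B * B * P r = B := by
      have e2 : (B * P r * B)ᵀ = B * B * P r := by
        rw [transpose_mul, h3, hBt, ← mul_assoc]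
      calc B * B * P r = (B * P r * B)ᵀ := e2.symm
        _ = Bᵀ := by rw [h1]
        _ = B := hBt
    -- dot identity : v ⬝ᵥ B *ᵥ v = (Ω *ᵥ v) ⬝ᵥ M *ᵥ (Ω *ᵥ v)
    have hdot : ∀ u : Fin m → ℝ, u ⬝ᵥ (B *ᵥ u) = (Ω *ᵥ u) ⬝ᵥ (M *ᵥ (Ω *ᵥ u)) := by
      intro u
      rw [hB, ← mulVec_mulVec, ← mulVec_mulVec, dotProduct_mulVec]
      congr 1
      rw [← hΩt, vecMul_transpose, hΩt]
    constructor
    · intro hv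
      have hBv : B *ᵥ v = 0 := by
        calc B *ᵥ v = (B * B * P r) *ᵥ v := by rw [idB]
          _ = (B * B) *ᵥ ((P r) *ᵥ v) := by rw [mulVec_mulVec]
          _ = 0 := by rw [hv, mulVec_zero]
      have hq : (Ω *ᵥ v) ⬝ᵥ (M *ᵥ (Ω *ᵥ v)) = 0 := by
        rw [← hdot, hBv, dotProduct_zero]
      exact hPD0 _ hq
    · intro hv
      have hBv : B *ᵥ v = 0 := by
        rw [hB, ← mulVec_mulVec, hv, mulVec_zero]
      calc (P r) *ᵥ v = (P r * (P r)ᵀ * B) *ᵥ v := by rw [idA]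
        _ = (P r * (P r)ᵀ) *ᵥ (B *ᵥ v) := by rw [mulVec_mulVec]
        _ = 0 := by rw [hBv, mulVec_zero]
  -- fixed point condition
  have fix_iff : ∀ x : Fin m → ℝ,
      (∀ r, (F r) *ᵥ x = x) ↔ ∀ r, (Omega (C r)) *ᵥ (M *ᵥ x) = 0 := by
    intro x
    refine forall_congr' fun r => ?_
    rw [hF r, sub_mulVec, one_mulVec, sub_eq_self, ← mulVec_mulVec]
    exact key r _
  -- symmetry of Ω in dot products
  have hsymm : ∀ r (y w : Fin m → ℝ),
      ((Omega (C r)) *ᵥ y) ⬝ᵥ w = y ⬝ᵥ ((Omega (C r)) *ᵥ w) := by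
    intro r y w
    rw [dotProduct_mulVec y, ← vecMul_transpose, omega_transpose]
  -- orthogonality to S
  have forward : ∀ w : Fin m → ℝ, (∀ r, Omega (C r) *ᵥ w = 0) → ∀ s ∈ S, s ⬝ᵥ w = 0 := by
    intro w hw s hs
    have hle : S ≤ LinearMap.ker (dotLM w) := by
      rw [hS]
      apply iSup_le
      intro r
      rintro u ⟨y, rfl⟩
      rw [LinearMap.mem_ker]
      show ((Omega (C r)) *ᵥ y) ⬝ᵥ w = 0
      rw [hsymm, hw r, dotProduct_zero]
    exact hle hs
  have backward : ∀ w : Fin m → ℝ, (∀ s ∈ S, s ⬝ᵥ w = 0) → ∀ r, Omega (C r) *ᵥ w = 0 := by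
    intro w hw r
    have hmem : Omega (C r) *ᵥ w ∈ S := by
      rw [hS]
      exact le_iSup (fun r => LinearMap.range (Omega (C r)).mulVecLin) r ⟨w, rfl⟩
    have h0 : (Omega (C r) *ᵥ w) ⬝ᵥ w = 0 := hw _ hmem
    have hself : (Omega (C r) *ᵥ w) ⬝ᵥ (Omega (C r) *ᵥ w) = 0 := by
      rw [hsymm, mulVec_mulVec, omega_mul_self _ (hC r), ← hsymm]
      exact h0
    exact dotProduct_self_eq_zero.mp hself
  -- S ≤ ker f
  have hSK : S ≤ LinearMap.ker f := by
    rw [hS]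
    apply iSup_le
    intro r
    rintro u ⟨y, rfl⟩
    rw [LinearMap.mem_ker, hfapp]
    exact omega_mulVec_sum (C r) y
  constructor
  · intro hfix
    set K := LinearMap.ker f with hK
    let L : K →ₗ[ℝ] (S →ₗ[ℝ] ℝ) :=
      { toFun := fun x => (dotLM (M *ᵥ (x : Fin m → ℝ))).comp S.subtype
        map_add' := by
          intro x y
          ext s
          show (s : Fin m → ℝ) ⬝ᵥ (M *ᵥ ((x : Fin m → ℝ) + y)) = _
          rw [mulVec_add, dotProduct_add]
          rfl
        map_smul' := by
          intro a x
          ext s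
          show (s : Fin m → ℝ) ⬝ᵥ (M *ᵥ (a • (x : Fin m → ℝ))) = _
          rw [mulVec_smul, dotProduct_smul]
          rfl }
    have hinj : Function.Injective L := by
      rw [← LinearMap.ker_eq_bot, LinearMap.ker_eq_bot']
      intro x hx
      have hsum : ∑ i, (x : Fin m → ℝ) i = 0 := by
        rw [← hfapp]
        exact x.2
      have hdot : ∀ s ∈ S, s ⬝ᵥ (M *ᵥ (x : Fin m → ℝ)) = 0 := by
        intro s hs
        have := congrArg (fun g => g ⟨s, hs⟩) hx
        simpa [L, dotLM] using this
      have hΩ0 : ∀ r, Omega (C r) *ᵥ (M *ᵥ (x : Fin m → ℝ)) = 0 := backward _ hdot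
      have hx0 : (x : Fin m → ℝ) = 0 := hfix _ hsum ((fix_iff _).mpr hΩ0)
      exact Subtype.ext hx0
    have h1 : Module.finrank ℝ K ≤ Module.finrank ℝ (S →ₗ[ℝ] ℝ) :=
      LinearMap.finrank_le_finrank_of_injective hinj
    rw [Module.finrank_linearMap_self] at h1
    exact Submodule.eq_of_le_of_finrank_le hSK h1
  · intro hSeq x hsum hfx
    have hΩ0 : ∀ r, Omega (C r) *ᵥ (M *ᵥ x) = 0 := (fix_iff x).mp hfx
    have hxS : x ∈ S := by
      rw [hSeq, LinearMap.mem_ker, hfapp]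
      exact hsum
    exact hPD0 x (forward _ hΩ0 x hxS)
end

section
/- Fix integers m ≥ 1 and ℓ ≥ 1 and nonempty subsets (clusters) C_1, …, C_ℓ of {1,…,m}; for each r let Ω_r := diag(1_{C_r}) − (1/|C_r|) 1_{C_r} 1_{C_r}^T ∈ ℝ^{m×m}. Let G be the simple graph on vertex set {1,…,m} in which distinct vertices h and k are adjacent if and only if there exists r ∈ {1,…,ℓ} with h ∈ C_r and k ∈ C_r. Then the sum of the column spaces of Ω_1, …, Ω_ℓ equals the hyperplane ker 1^T = {x ∈ ℝ^m : 1^T x = 0} if and only if G is connected. -/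
open Matrix

lemma omega_mulVec {m : ℕ} (C : Finset (Fin m)) (x : Fin m → ℝ) (i : Fin m) :
    (Omega C).mulVec x i = if i ∈ C then x i - (∑ j ∈ C, x j) / C.card else 0 := by
  classical
  simp only [Omega, sub_mulVec, Pi.sub_apply, mulVec_diagonal, smul_mulVec,
    Pi.smul_apply, smul_eq_mul]
  have : (vecMulVec (fun i => if i ∈ C then (1:ℝ) else 0)
      (fun i => if i ∈ C then (1:ℝ) else 0)).mulVec x i
      = (if i ∈ C then (1:ℝ) else 0) * ∑ j ∈ C, x j := by
    simp [mulVec, dotProduct, vecMulVec_apply, mul_assoc, Finset.mul_sum, ite_mul,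
      Finset.sum_ite_mem, Finset.univ_inter]
  rw [this]
  by_cases h : i ∈ C <;> simp [h, div_eq_mul_inv, mul_comm]

/-- sum over a superset of C of Omega C x is 0 -/
lemma omega_sum_zero {m : ℕ} (C S : Finset (Fin m)) (hC : C.Nonempty) (hCS : C ⊆ S)
    (x : Fin m → ℝ) : ∑ i ∈ S, (Omega C).mulVec x i = 0 := by
  classical
  have hc : (C.card : ℝ) ≠ 0 := by
    exact_mod_cast Finset.card_ne_zero_of_mem hC.choose_spec
  rw [Finset.sum_congr rfl (fun i _ => omega_mulVec C x i)]
  rw [← Finset.sum_subset hCS (by intro i _ hi; simp [hi])]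
  rw [Finset.sum_ite_mem, Finset.inter_self, Finset.sum_sub_distrib]
  field_simp
  rw [Finset.sum_const, nsmul_eq_mul, mul_div_cancel₀ (∑ j ∈ C, x j) hc, sub_self]

lemma omega_zero_off {m : ℕ} (C : Finset (Fin m)) (x : Fin m → ℝ) (i : Fin m) (hi : i ∉ C) :
    (Omega C).mulVec x i = 0 := by
  rw [omega_mulVec]; simp [hi]

lemma omega_fix {m : ℕ} (C : Finset (Fin m)) {h k : Fin m} (hh : h ∈ C) (hk : k ∈ C) :
    (Omega C).mulVec (Pi.single h 1 - Pi.single k 1) = Pi.single h 1 - Pi.single k 1 := by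
  classical
  funext i
  rw [omega_mulVec]
  have hs : ∑ j ∈ C, (Pi.single h 1 - Pi.single k 1 : Fin m → ℝ) j = 0 := by
    simp only [Pi.sub_apply, Finset.sum_sub_distrib, Pi.single_apply]
    rw [Finset.sum_ite_eq' C h, Finset.sum_ite_eq' C k]
    simp [hh, hk]
  rw [hs]
  by_cases hi : i ∈ C
  · simp [hi]
  · have h1 : i ≠ h := fun e => hi (e ▸ hh)
    have h2 : i ≠ k := fun e => hi (e ▸ hk)
    simp [hi, Pi.single_apply, h1, h2]


/-- The sum of the column spaces of the `Ω_r` equals the hyperplane `ker 1ᵀ`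
if and only if the graph in which `h ∼ k` whenever some cluster contains both `h` and `k`
is connected. -/
theorem span_iff_connected (m ℓ : ℕ) (hm : 1 ≤ m) (hℓ : 1 ≤ ℓ)
    (C : Fin ℓ → Finset (Fin m)) (hC : ∀ r, (C r).Nonempty) :
    let G : SimpleGraph (Fin m) :=
      { Adj := fun h k => h ≠ k ∧ ∃ r, h ∈ C r ∧ k ∈ C r
        symm := by
          constructor
          intro h k hk
          obtain ⟨hne, r, h1, h2⟩ := hk
          exact ⟨hne.symm, r, h2, h1⟩
        loopless := by
          constructor
          intro h hk
          exact hk.1 rfl }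
    ((⨆ r, LinearMap.range (Omega (C r)).mulVecLin)
        = LinearMap.ker (∑ i : Fin m, (LinearMap.proj i : (Fin m → ℝ) →ₗ[ℝ] ℝ)))
      ↔ G.Connected := by
  classical
  intro G
  set V : Submodule ℝ (Fin m → ℝ) := ⨆ r, LinearMap.range (Omega (C r)).mulVecLin with hV
  have hker : ∀ x : Fin m → ℝ,
      x ∈ LinearMap.ker (∑ i : Fin m, (LinearMap.proj i : (Fin m → ℝ) →ₗ[ℝ] ℝ))
      ↔ ∑ i, x i = 0 := by
    intro x
    simp [LinearMap.mem_ker, LinearMap.sum_apply]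
  -- edges give elements of V
  have hedge : ∀ {h k : Fin m}, G.Adj h k →
      (Pi.single h 1 - Pi.single k 1 : Fin m → ℝ) ∈ V := by
    intro h k hadj
    obtain ⟨hne, r, h1, h2⟩ := hadj
    refine Submodule.mem_iSup_of_mem r ⟨Pi.single h 1 - Pi.single k 1, ?_⟩
    rw [mulVecLin_apply]
    exact omega_fix (C r) h1 h2
  have hreach : ∀ {h k : Fin m}, G.Reachable h k →
      (Pi.single h 1 - Pi.single k 1 : Fin m → ℝ) ∈ V := by
    intro h k hr
    obtain ⟨w⟩ := hr
    induction w with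
    | nil => simp
    | cons hadj w ih =>
      rename_i a b c
      have : (Pi.single a 1 - Pi.single c 1 : Fin m → ℝ)
          = (Pi.single a 1 - Pi.single b 1) + (Pi.single b 1 - Pi.single c 1) := by ring
      rw [this]
      exact V.add_mem (hedge hadj) ih
  constructor
  · -- V = ker → connected
    intro hVeq
    haveI : Nonempty (Fin m) := ⟨⟨0, hm⟩⟩
    refine ⟨fun h k => ?_⟩
    by_contra hnr
    have hne : h ≠ k := fun e => hnr (e ▸ SimpleGraph.Reachable.refl h)
    set S : Finset (Fin m) := Finset.univ.filter (fun i => G.Reachable h i) with hS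
    have hhS : h ∈ S := by simp only [hS, Finset.mem_filter, Finset.mem_univ, true_and]; exact SimpleGraph.Reachable.refl h
    have hkS : k ∉ S := by simp only [hS, Finset.mem_filter, Finset.mem_univ, true_and]; exact hnr
    -- V ≤ ker of sum over S
    have hVle : ∀ x ∈ V, ∑ i ∈ S, x i = 0 := by
      intro x hx
      have : V ≤ LinearMap.ker (∑ i ∈ S, (LinearMap.proj i : (Fin m → ℝ) →ₗ[ℝ] ℝ)) := by
        rw [hV]
        refine iSup_le fun r => ?_
        rintro _ ⟨y, rfl⟩
        rw [LinearMap.mem_ker]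
        simp only [LinearMap.sum_apply, LinearMap.proj_apply, mulVecLin_apply]
        by_cases hcase : ∃ i ∈ C r, i ∈ S
        · obtain ⟨i0, hi0C, hi0S⟩ := hcase
          have hsub : C r ⊆ S := by
            intro j hj
            simp only [hS, Finset.mem_filter, Finset.mem_univ, true_and] at hi0S ⊢
            by_cases hji : j = i0
            · exact hji ▸ hi0S
            · exact hi0S.trans (SimpleGraph.Adj.reachable ⟨Ne.symm hji, r, hi0C, hj⟩)
          exact omega_sum_zero (C r) S (hC r) hsub y
        · push_neg at hcase
          refine Finset.sum_eq_zero fun i hi => ?_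
          exact omega_zero_off (C r) y i fun hiC => hcase i hiC hi
      have := this hx
      rw [LinearMap.mem_ker] at this
      simpa [LinearMap.sum_apply] using this
    have hmem : (Pi.single h 1 - Pi.single k 1 : Fin m → ℝ) ∈ V := by
      rw [hVeq, hker]
      simp only [Pi.sub_apply, Finset.sum_sub_distrib, Pi.single_apply]
      rw [Finset.sum_ite_eq' Finset.univ h fun _ => (1:ℝ),
        Finset.sum_ite_eq' Finset.univ k fun _ => (1:ℝ)]
      simp
    have := hVle _ hmem
    simp only [Pi.sub_apply, Finset.sum_sub_distrib, Pi.single_apply] at this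
    rw [Finset.sum_ite_eq' S h, Finset.sum_ite_eq' S k] at this
    simp [hhS, hkS] at this
  · -- connected → V = ker
    intro hconn
    apply le_antisymm
    · rw [hV]
      refine iSup_le fun r => ?_
      rintro _ ⟨y, rfl⟩
      rw [hker, mulVecLin_apply]
      have : ∑ i, (Omega (C r)).mulVec y i = ∑ i ∈ (Finset.univ : Finset (Fin m)), (Omega (C r)).mulVec y i := rfl
      rw [this]
      exact omega_sum_zero (C r) Finset.univ (hC r) (Finset.subset_univ _) y
    · intro x hx
      rw [hker] at hx
      set i0 : Fin m := ⟨0, hm⟩ with hi0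
      have h1 : ∀ i, x i • (Pi.single i (1:ℝ) : Fin m → ℝ) = Pi.single i (x i) := by
        intro i; funext j
        by_cases hj : j = i <;> simp [Pi.single_apply, hj]
      have hxe : x = ∑ i, x i • ((Pi.single i 1 - Pi.single i0 1 : Fin m → ℝ)) := by
        simp only [smul_sub, Finset.sum_sub_distrib]
        rw [Finset.sum_congr rfl fun i _ => h1 i, Finset.univ_sum_single,
          ← Finset.sum_smul, hx, zero_smul, sub_zero]
      rw [hxe]
      exact V.sum_mem fun i _ => V.smul_mem _ (hreach (hconn.preconnected i i0))
end

section
/- Fix integers m ≥ 1 and ℓ ≥ 1 and nonempty subsets (clusters) C_1, …, C_ℓ of {1,…,m}; for each r let Ω_r := diag(1_{C_r}) − (1/|C_r|) 1_{C_r} 1_{C_r}^T ∈ ℝ^{m×m}. Let M ∈ ℝ^{m×m} be symmetric positive definite, P_r the Moore–Penrose pseudoinverse of Ω_r M Ω_r, F_r := I − P_r M, let ρ_1, …, ρ_ℓ be positive reals with Σ_r ρ_r = 1, and set F_ave := Σ_r ρ_r F_r. Then: (a) every (complex) eigenvalue of F_ave is real and has absolute value at most 1; (b) 1^T F_ave =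 1^T; (c) if moreover the sum of the column spaces of Ω_1, …, Ω_ℓ equals ker 1^T, then the eigenspace of F_ave for the eigenvalue 1 is the one-dimensional span of M^{−1} 1, and every eigenvalue λ ≠ 1 of F_ave satisfies |λ| < 1. -/
open Matrix

/-- `lam` is a (complex) eigenvalue of the real matrix `A`. -/
def IsEigenvalue {m : ℕ} (A : Matrix (Fin m) (Fin m) ℝ) (lam : ℂ) : Prop :=
  ∃ v : Fin m → ℂ, v ≠ 0 ∧ (A.map (fun a => (a : ℂ))).mulVec v = lam • v


section
variable {m : ℕ} (C : Finset (Fin m))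

private def ind (C : Finset (Fin m)) : Fin m → ℝ := fun i => if i ∈ C then (1 : ℝ) else 0

lemma ind_mul_self (i : Fin m) : ind C i * ind C i = ind C i := by
  by_cases h : i ∈ C <;> simp [ind, h]

lemma omega_eq : Omega C = Matrix.diagonal (ind C) -
    (1 / (C.card : ℝ)) • Matrix.vecMulVec (ind C) (ind C) := rfl

lemma omega_symm : (Omega C)ᵀ = Omega C := by
  rw [omega_eq]
  ext i j
  simp only [Matrix.transpose_apply, Matrix.sub_apply, Matrix.smul_apply,
    Matrix.diagonal_apply, vecMulVec_apply, smul_eq_mul]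
  rw [mul_comm (ind C j)]
  congr 1
  by_cases h : i = j <;> simp [h, eq_comm]

lemma diag_mul_vmv : Matrix.diagonal (ind C) * Matrix.vecMulVec (ind C) (ind C)
    = Matrix.vecMulVec (ind C) (ind C) := by
  ext i j
  rw [Matrix.diagonal_mul, vecMulVec_apply, ← mul_assoc, ind_mul_self]

lemma vmv_mul_diag : Matrix.vecMulVec (ind C) (ind C) * Matrix.diagonal (ind C)
    = Matrix.vecMulVec (ind C) (ind C) := by
  ext i j
  rw [Matrix.mul_diagonal, vecMulVec_apply, mul_assoc, ind_mul_self]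

lemma vmv_mul_vmv : Matrix.vecMulVec (ind C) (ind C) * Matrix.vecMulVec (ind C) (ind C)
    = (C.card : ℝ) • Matrix.vecMulVec (ind C) (ind C) := by
  ext i j
  simp only [Matrix.mul_apply, vecMulVec_apply, Matrix.smul_apply, smul_eq_mul]
  have : ∀ k : Fin m, ind C i * ind C k * (ind C k * ind C j)
      = (ind C i * ind C j) * ind C k := by
    intro k
    rw [show ind C i * ind C k * (ind C k * ind C j) = (ind C i * ind C j) * (ind C k * ind C k) by ring,
      ind_mul_self]
  rw [Finset.sum_congr rfl fun k _ => this k, ← Finset.mul_sum]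
  have : ∑ k, ind C k = (C.card : ℝ) := by simp [ind, Finset.sum_ite_mem]
  rw [this]; ring

lemma omega_idem (h : C.Nonempty) : Omega C * Omega C = Omega C := by
  have hc : (C.card : ℝ) ≠ 0 := by
    exact_mod_cast (Finset.card_pos.mpr h).ne'
  rw [omega_eq, sub_mul, mul_sub, mul_sub, Matrix.diagonal_mul_diagonal,
    smul_mul_assoc, smul_mul_assoc, Matrix.mul_smul, Matrix.mul_smul,
    diag_mul_vmv, vmv_mul_diag, vmv_mul_vmv, smul_smul, smul_smul]
  have h1 : (fun i => ind C i * ind C i) = ind C := funext fun i => ind_mul_self C i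
  rw [h1]
  have h2 : 1 / (C.card : ℝ) * (1 / (C.card : ℝ)) * (C.card : ℝ) = 1 / (C.card : ℝ) := by
    field_simp
  rw [h2]
  abel

lemma omega_mulVec_one (h : C.Nonempty) :
    (Omega C).mulVec (fun _ => (1:ℝ)) = 0 := by
  have hc : (C.card : ℝ) ≠ 0 := by
    exact_mod_cast (Finset.card_pos.mpr h).ne'
  have hs : ∑ k, ind C k = (C.card : ℝ) := by simp [ind, Finset.sum_ite_mem]
  funext i
  rw [omega_eq, Matrix.sub_mulVec, Matrix.smul_mulVec]
  have h1 : (Matrix.diagonal (ind C)).mulVec (fun _ => (1:ℝ)) = ind C := by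
    funext j; rw [Matrix.mulVec_diagonal, mul_one]
  have h2 : (Matrix.vecMulVec (ind C) (ind C)).mulVec (fun _ => (1:ℝ)) = (C.card : ℝ) • ind C := by
    funext j
    simp only [Matrix.mulVec, dotProduct, vecMulVec_apply, mul_one, Pi.smul_apply,
      smul_eq_mul, ← Finset.mul_sum, hs]
    ring
  rw [h1, h2]
  simp only [Pi.sub_apply, Pi.smul_apply, smul_eq_mul, Pi.zero_apply]
  field_simp
  ring
end

section MP
variable {m : ℕ}

lemma mp_transpose {B P : Matrix (Fin m) (Fin m) ℝ} (hB : Bᵀ = B) (h : IsMP B P) :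
    IsMP B Pᵀ := by
  obtain ⟨h1, h2, h3, h4⟩ := h
  refine ⟨?_, ?_, ?_, ?_⟩
  · calc B * Pᵀ * B = (Bᵀ * P * Bᵀ)ᵀ := by simp [Matrix.transpose_mul, mul_assoc]
    _ = B := by rw [hB, h1, hB]
  · calc Pᵀ * B * Pᵀ = (P * Bᵀ * P)ᵀ := by simp [Matrix.transpose_mul, mul_assoc]
    _ = Pᵀ := by rw [hB, h2]
  · calc (B * Pᵀ)ᵀ = P * Bᵀ := by simp [Matrix.transpose_mul, mul_assoc]
    _ = P * B := by rw [hB]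
    _ = (P * B)ᵀ := h4.symm
    _ = Bᵀ * Pᵀ := by simp [Matrix.transpose_mul, mul_assoc]
    _ = B * Pᵀ := by rw [hB]
  · calc (Pᵀ * B)ᵀ = Bᵀ * P := by simp [Matrix.transpose_mul, mul_assoc]
    _ = B * P := by rw [hB]
    _ = (B * P)ᵀ := h3.symm
    _ = Pᵀ * Bᵀ := by simp [Matrix.transpose_mul, mul_assoc]
    _ = Pᵀ * B := by rw [hB]

lemma mp_unique {B P Q : Matrix (Fin m) (Fin m) ℝ} (h1 : IsMP B P) (h2 : IsMP B Q) :
    P = Q := by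
  obtain ⟨p1, p2, p3, p4⟩ := h1
  obtain ⟨q1, q2, q3, q4⟩ := h2
  have hBP : B * P = B * Q := by
    calc B * P = (B * Q * B) * P := by rw [q1]
    _ = (B * Q) * (B * P) := by rw [mul_assoc]
    _ = (B * Q)ᵀ * (B * P)ᵀ := by rw [q3, p3]
    _ = (Qᵀ * (B * P * B)ᵀ) := by simp [Matrix.transpose_mul, mul_assoc]
    _ = Qᵀ * Bᵀ := by rw [p1]
    _ = (B * Q)ᵀ := by simp [Matrix.transpose_mul, mul_assoc]
    _ = B * Q := q3
  have hPB : P * B = Q * B := by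
    calc P * B = P * (B * Q * B) := by rw [q1]
    _ = (P * B) * (Q * B) := by simp only [mul_assoc]
    _ = (P * B)ᵀ * (Q * B)ᵀ := by rw [q4, p4]
    _ = (B * P * B)ᵀ * Qᵀ := by simp [Matrix.transpose_mul, mul_assoc]
    _ = Bᵀ * Qᵀ := by rw [p1]
    _ = (Q * B)ᵀ := by simp [Matrix.transpose_mul, mul_assoc]
    _ = Q * B := q4
  calc P = P * B * P := p2.symm
  _ = Q * B * P := by rw [hPB]
  _ = Q * (B * P) := by rw [mul_assoc]
  _ = Q * (B * Q) := by rw [hBP]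
  _ = Q * B * Q := by rw [mul_assoc]
  _ = Q := q2

lemma mp_symm {B P : Matrix (Fin m) (Fin m) ℝ} (hB : Bᵀ = B) (h : IsMP B P) :
    Pᵀ = P := mp_unique (mp_transpose hB h) h

end MP

section OmegaP
variable {m : ℕ} {C : Finset (Fin m)} {M P : Matrix (Fin m) (Fin m) ℝ}

lemma trans_of_posdef (hM : M.PosDef) : Mᵀ = M := by
  rw [← Matrix.conjTranspose_eq_transpose_of_trivial]; exact hM.isHermitian

lemma B_symm (hM : M.PosDef) :
    (Omega C * M * Omega C)ᵀ = Omega C * M * Omega C := by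
  simp [Matrix.transpose_mul, omega_symm, trans_of_posdef hM, mul_assoc]

lemma P_symm (hM : M.PosDef) (hP : IsMP (Omega C * M * Omega C) P) : Pᵀ = P :=
  mp_symm (B_symm hM) hP

lemma BP_comm (hM : M.PosDef) (hP : IsMP (Omega C * M * Omega C) P) :
    (Omega C * M * Omega C) * P = P * (Omega C * M * Omega C) := by
  calc (Omega C * M * Omega C) * P
      = (Omega C * M * Omega C)ᵀ * Pᵀ := by rw [B_symm hM, P_symm hM hP]
    _ = (P * (Omega C * M * Omega C))ᵀ := (Matrix.transpose_mul P _).symm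
    _ = P * (Omega C * M * Omega C) := hP.2.2.2

lemma P_mul_omega (hC : C.Nonempty) (hM : M.PosDef)
    (hP : IsMP (Omega C * M * Omega C) P) : P * Omega C = P := by
  set B := Omega C * M * Omega C with hB
  have hBΩ : B * Omega C = B := by
    rw [hB, mul_assoc (Omega C * M), omega_idem C hC]
  have hPPB : P = P * P * B := by
    calc P = P * B * P := hP.2.1.symm
    _ = P * (B * P) := by rw [mul_assoc]
    _ = P * (P * B) := by rw [BP_comm hM hP]
    _ = P * P * B := by rw [mul_assoc]
  calc P * Omega C = P * P * B * Omega C := by rw [← hPPB]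
  _ = P * P * (B * Omega C) := by rw [mul_assoc]
  _ = P * P * B := by rw [hBΩ]
  _ = P := hPPB.symm

lemma omega_mul_P (hC : C.Nonempty) (hM : M.PosDef)
    (hP : IsMP (Omega C * M * Omega C) P) : Omega C * P = P := by
  calc Omega C * P = (Omega C)ᵀ * Pᵀ := by rw [omega_symm, P_symm hM hP]
  _ = (P * Omega C)ᵀ := (Matrix.transpose_mul P _).symm
  _ = Pᵀ := by rw [P_mul_omega hC hM hP]
  _ = P := P_symm hM hP

lemma PMP (hC : C.Nonempty) (hM : M.PosDef)
    (hP : IsMP (Omega C * M * Omega C) P) : P * M * P = P := by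
  calc P * M * P = (P * Omega C) * M * (Omega C * P) := by
        rw [P_mul_omega hC hM hP, omega_mul_P hC hM hP]
  _ = P * (Omega C * M * Omega C) * P := by simp only [mul_assoc]
  _ = P := hP.2.1

lemma conj_transpose_real (A : Matrix (Fin m) (Fin m) ℝ) : Aᴴ = Aᵀ :=
  Matrix.conjTranspose_eq_transpose_of_trivial A

lemma P_psd (hM : M.PosDef) (hP : IsMP (Omega C * M * Omega C) P) : P.PosSemidef := by
  set B := Omega C * M * Omega C with hB
  have hBpsd : B.PosSemidef := by
    have := hM.posSemidef.conjTranspose_mul_mul_same (Omega C)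
    rwa [conj_transpose_real, omega_symm] at this
  have : (Pᴴ * B * P).PosSemidef := hBpsd.conjTranspose_mul_mul_same P
  rwa [conj_transpose_real, P_symm hM hP, hP.2.1] at this

lemma MPM_psd (hM : M.PosDef) (hP : IsMP (Omega C * M * Omega C) P) :
    (M * P * M).PosSemidef := by
  have : (Mᴴ * P * M).PosSemidef := (P_psd hM hP).conjTranspose_mul_mul_same M
  rwa [conj_transpose_real, trans_of_posdef hM] at this

lemma M_sub_MPM_eq (hC : C.Nonempty) (hM : M.PosDef)
    (hP : IsMP (Omega C * M * Omega C) P) :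
    (1 - P * M)ᵀ * M * (1 - P * M) = M - M * P * M := by
  have hMs := trans_of_posdef hM
  have hPs := P_symm hM hP
  have h1 : (1 - P * M)ᵀ = 1 - M * P := by
    simp [Matrix.transpose_sub, Matrix.transpose_mul, hMs, hPs]
  rw [h1, Matrix.sub_mul, Matrix.sub_mul, Matrix.mul_sub, Matrix.mul_sub]
  have h2 : M * P * (M * (P * M)) = M * P * M := by
    calc M * P * (M * (P * M)) = M * (P * M * P) * M := by simp only [mul_assoc]
    _ = M * P * M := by rw [PMP hC hM hP, mul_assoc]
  simp only [one_mul, mul_one, ← mul_assoc] at *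
  rw [h2]
  abel

lemma M_sub_MPM_psd (hC : C.Nonempty) (hM : M.PosDef)
    (hP : IsMP (Omega C * M * Omega C) P) :
    (M - M * P * M).PosSemidef := by
  rw [← M_sub_MPM_eq hC hM hP]
  have := hM.posSemidef.conjTranspose_mul_mul_same (1 - P * M)
  rwa [conj_transpose_real] at this

lemma P_mulVec_one (hC : C.Nonempty) (hM : M.PosDef)
    (hP : IsMP (Omega C * M * Omega C) P) :
    P.mulVec (fun _ => (1:ℝ)) = 0 := by
  rw [← P_mul_omega hC hM hP, ← Matrix.mulVec_mulVec, omega_mulVec_one C hC,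
    Matrix.mulVec_zero]

lemma one_vecMul_P (hC : C.Nonempty) (hM : M.PosDef)
    (hP : IsMP (Omega C * M * Omega C) P) :
    Matrix.vecMul (fun _ => (1:ℝ)) P = 0 := by
  rw [← P_symm hM hP, Matrix.vecMul_transpose, P_mulVec_one hC hM hP]

end OmegaP

section Quad
variable {m : ℕ}

lemma dot_symm {R : Matrix (Fin m) (Fin m) ℝ} (hR : Rᵀ = R) (a b : Fin m → ℝ) :
    a ⬝ᵥ R *ᵥ b = b ⬝ᵥ R *ᵥ a := by
  rw [Matrix.dotProduct_mulVec]
  conv_lhs => rw [← hR, Matrix.vecMul_transpose]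
  rw [dotProduct_comm]

lemma cast_quad (R : Matrix (Fin m) (Fin m) ℝ) (c d : Fin m → ℝ) :
    (fun i => ((c i : ℂ))) ⬝ᵥ (R.map (fun a => (a:ℂ))) *ᵥ (fun i => ((d i : ℂ)))
      = ((c ⬝ᵥ R *ᵥ d : ℝ) : ℂ) := by
  have h1 : (fun i => ((d i : ℂ))) = Complex.ofRealHom ∘ d := rfl
  have h2 : (fun i => ((c i : ℂ))) = Complex.ofRealHom ∘ c := rfl
  have h3 : R.map (fun a => (a:ℂ)) = R.map Complex.ofRealHom := rfl
  rw [h1, h2, h3]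
  have h4 : (R.map Complex.ofRealHom) *ᵥ (Complex.ofRealHom ∘ d)
      = Complex.ofRealHom ∘ (R *ᵥ d) := by
    funext i; rw [Function.comp_apply, RingHom.map_mulVec]
  rw [h4, ← RingHom.map_dotProduct]
  rfl

lemma vecMul_omega (C : Finset (Fin m)) (z : Fin m → ℝ) :
    z ᵥ* Omega C = Omega C *ᵥ z := by
  conv_lhs => rw [← omega_symm C]
  rw [Matrix.vecMul_transpose]

lemma herm_quad {R : Matrix (Fin m) (Fin m) ℝ} (hR : Rᵀ = R) (v : Fin m → ℂ) :
    star v ⬝ᵥ (R.map (fun a => (a:ℂ))) *ᵥ v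
      = ((((fun i => (v i).re) ⬝ᵥ R *ᵥ (fun i => (v i).re)
          + (fun i => (v i).im) ⬝ᵥ R *ᵥ (fun i => (v i).im)) : ℝ) : ℂ) := by
  set a : Fin m → ℝ := fun i => (v i).re with ha
  set b : Fin m → ℝ := fun i => (v i).im with hb
  set aC : Fin m → ℂ := fun i => ((a i : ℂ)) with haC
  set bC : Fin m → ℂ := fun i => ((b i : ℂ)) with hbC
  have hv : v = aC + Complex.I • bC := by
    funext i
    simp [haC, hbC, ha, hb, Complex.ext_iff]
  have hstar : star v = aC - Complex.I • bC := by
    funext i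
    simp [haC, hbC, ha, hb, Complex.ext_iff]
  set Rc := R.map (fun a => (a:ℂ)) with hRc
  rw [hstar]
  conv_lhs => rw [hv]
  simp only [Matrix.mulVec_add, Matrix.mulVec_smul, sub_dotProduct,
    dotProduct_add, smul_dotProduct, dotProduct_smul]
  rw [cast_quad R a a, cast_quad R a b, cast_quad R b a, cast_quad R b b]
  rw [dot_symm hR b a]
  simp only [smul_eq_mul]
  push_cast
  ring_nf
  rw [Complex.I_sq]
  ring

end Quad

section Key
variable {m : ℕ}

lemma star_real (x : Fin m → ℝ) : star x = x := by
  funext i; simp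

lemma key_eig {M S A : Matrix (Fin m) (Fin m) ℝ} (hM : M.PosDef) (hS : S.PosSemidef)
    (hMS : (M - S).PosSemidef) (hSA : S = M * A) {lam : ℂ} (h : IsEigenvalue A lam) :
    ∃ q : ℝ, 0 ≤ q ∧ q ≤ 1 ∧ lam = (q : ℂ) := by
  obtain ⟨v, hv0, hEig⟩ := h
  set a : Fin m → ℝ := fun i => (v i).re with ha
  set b : Fin m → ℝ := fun i => (v i).im with hb
  have hMs : Mᵀ = M := trans_of_posdef hM
  have hSs : Sᵀ = S := by rw [← conj_transpose_real]; exact hS.1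
  set qm : ℝ := a ⬝ᵥ M *ᵥ a + b ⬝ᵥ M *ᵥ b with hqm
  set qs : ℝ := a ⬝ᵥ S *ᵥ a + b ⬝ᵥ S *ᵥ b with hqs
  have h1 : star v ⬝ᵥ (M.map (fun x => (x:ℂ))) *ᵥ v = (qm : ℂ) := herm_quad hMs v
  have h2 : star v ⬝ᵥ (S.map (fun x => (x:ℂ))) *ᵥ v = (qs : ℂ) := herm_quad hSs v
  have hmapmul : S.map (fun x => (x:ℂ)) = M.map (fun x => (x:ℂ)) * A.map (fun x => (x:ℂ)) := by
    rw [hSA]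
    exact Matrix.map_mul (f := Complex.ofRealHom)
  have h3 : (qs : ℂ) = lam * (qm : ℂ) := by
    rw [← h2, hmapmul, ← Matrix.mulVec_mulVec, hEig, Matrix.mulVec_smul,
      dotProduct_smul, h1, smul_eq_mul]
  have hnn : ∀ (R : Matrix (Fin m) (Fin m) ℝ), R.PosSemidef → ∀ x : Fin m → ℝ,
      0 ≤ x ⬝ᵥ R *ᵥ x := by
    intro R hR x
    have := hR.dotProduct_mulVec_nonneg x
    rwa [star_real] at this
  have hqm_pos : 0 < qm := by
    have hab : a ≠ 0 ∨ b ≠ 0 := by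
      by_contra hcon
      push_neg at hcon
      apply hv0
      funext i
      have h1 := congrFun hcon.1 i
      have h2 := congrFun hcon.2 i
      simp only [ha, hb, Pi.zero_apply] at h1 h2
      exact Complex.ext h1 h2
    rcases hab with hab | hab
    · have := hM.dotProduct_mulVec_pos hab
      rw [star_real] at this
      exact lt_of_lt_of_le this (le_add_of_nonneg_right (hnn M hM.posSemidef b))
    · have := hM.dotProduct_mulVec_pos hab
      rw [star_real] at this
      exact lt_of_lt_of_le this (le_add_of_nonneg_left (hnn M hM.posSemidef a))
  have hqs_nonneg : 0 ≤ qs := add_nonneg (hnn S hS a) (hnn S hS b)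
  have hqs_le : qs ≤ qm := by
    have hA := hnn _ hMS a
    have hB := hnn _ hMS b
    rw [Matrix.sub_mulVec, dotProduct_sub] at hA hB
    rw [hqm, hqs]
    linarith
  refine ⟨qs / qm, div_nonneg hqs_nonneg hqm_pos.le, (div_le_one hqm_pos).mpr hqs_le, ?_⟩
  have hqm0 : (qm : ℂ) ≠ 0 := by
    exact_mod_cast hqm_pos.ne'
  field_simp
  rw [Complex.ofReal_div, h3, mul_div_cancel_right₀ _ hqm0]

lemma sum_mulVec' {ℓ : ℕ} (A : Fin ℓ → Matrix (Fin m) (Fin m) ℝ) (x : Fin m → ℝ) :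
    (∑ r, A r) *ᵥ x = ∑ r, A r *ᵥ x := by
  funext i
  simp only [Matrix.mulVec, dotProduct, Matrix.sum_apply, Finset.sum_apply,
    Finset.sum_mul]
  rw [Finset.sum_comm]

lemma vecMul_sum' {ℓ : ℕ} (A : Fin ℓ → Matrix (Fin m) (Fin m) ℝ) (x : Fin m → ℝ) :
    x ᵥ* (∑ r, A r) = ∑ r, x ᵥ* A r := by
  funext i
  simp only [Matrix.vecMul, dotProduct, Matrix.sum_apply, Finset.sum_apply,
    Finset.mul_sum]
  rw [Finset.sum_comm]

lemma vecMul_smulMat (c : ℝ) (A : Matrix (Fin m) (Fin m) ℝ) (x : Fin m → ℝ) :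
    x ᵥ* (c • A) = c • (x ᵥ* A) := by
  funext i
  simp only [Matrix.vecMul, dotProduct, Matrix.smul_apply, Pi.smul_apply,
    smul_eq_mul, Finset.mul_sum]
  congr 1; funext j; ring

lemma dot_sum' {ℓ : ℕ} (x : Fin m → ℝ) (v : Fin ℓ → (Fin m → ℝ)) :
    x ⬝ᵥ (∑ r, v r) = ∑ r, x ⬝ᵥ v r := by
  simp only [dotProduct, Finset.sum_apply, Finset.mul_sum]
  rw [Finset.sum_comm]

lemma psd_sum {ℓ : ℕ} (ρ : Fin ℓ → ℝ) (hρ : ∀ r, 0 ≤ ρ r)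
    (G : Fin ℓ → Matrix (Fin m) (Fin m) ℝ) (hG : ∀ r, (G r).PosSemidef) :
    (∑ r, ρ r • G r).PosSemidef := by
  refine Matrix.posSemidef_iff_dotProduct_mulVec.mpr ⟨?_, ?_⟩
  · show (∑ r, ρ r • G r)ᴴ = _
    rw [Matrix.conjTranspose_sum]
    exact Finset.sum_congr rfl fun r _ => by
      rw [Matrix.conjTranspose_smul, (hG r).1]
      norm_num
  · intro x
    rw [star_real, sum_mulVec', dot_sum']
    refine Finset.sum_nonneg fun r _ => ?_
    rw [smul_mulVec, dotProduct_smul, smul_eq_mul]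
    have := (hG r).dotProduct_mulVec_nonneg x
    rw [star_real] at this
    exact mul_nonneg (hρ r) this

end Key

/-- All eigenvalues of `F_ave = Σ_r ρ_r F_r` are real, of absolute value at
most 1; `1ᵀ F_ave = 1ᵀ`; and if the column spaces of the `Ω_r` sum to `ker 1ᵀ`, then the
eigenspace for the eigenvalue 1 is the span of `M⁻¹ 1` and every other eigenvalue has absolute
value strictly less than 1. -/
theorem Fave_eigenvalues (m ℓ : ℕ) (hm : 1 ≤ m) (hℓ : 1 ≤ ℓ)
    (C : Fin ℓ → Finset (Fin m)) (hC : ∀ r, (C r).Nonempty)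
    (M : Matrix (Fin m) (Fin m) ℝ) (hM : M.PosDef)
    (P : Fin ℓ → Matrix (Fin m) (Fin m) ℝ)
    (hP : ∀ r, IsMP (Omega (C r) * M * Omega (C r)) (P r))
    (F : Fin ℓ → Matrix (Fin m) (Fin m) ℝ) (hF : ∀ r, F r = 1 - P r * M)
    (ρ : Fin ℓ → ℝ) (hρ : ∀ r, 0 < ρ r) (hρsum : ∑ r, ρ r = 1)
    (Fave : Matrix (Fin m) (Fin m) ℝ) (hFave : Fave = ∑ r, ρ r • F r) :
    -- (a)
    (∀ lam : ℂ, IsEigenvalue Fave lam → lam.im = 0 ∧ ‖lam‖ ≤ 1) ∧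
    -- (b)
    (Matrix.vecMul (fun _ => (1 : ℝ)) Fave = fun _ => (1 : ℝ)) ∧
    -- (c)
    ((⨆ r, LinearMap.range (Omega (C r)).mulVecLin)
        = LinearMap.ker (∑ i : Fin m, (LinearMap.proj i : (Fin m → ℝ) →ₗ[ℝ] ℝ)) →
      (∀ x : Fin m → ℝ, Fave.mulVec x = x ↔ ∃ c : ℝ, x = c • M⁻¹.mulVec fun _ => 1) ∧
      (∀ lam : ℂ, IsEigenvalue Fave lam → lam ≠ 1 → ‖lam‖ < 1)) := by
  have hMs : Mᵀ = M := trans_of_posdef hM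
  have hMF : ∀ r, M * F r = M - M * P r * M := by
    intro r; rw [hF r, Matrix.mul_sub, mul_one, ← mul_assoc]
  have hSe : M * Fave = ∑ r, ρ r • (M - M * P r * M) := by
    rw [hFave, Finset.mul_sum]
    exact Finset.sum_congr rfl fun r _ => by rw [mul_smul_comm, hMF r]
  have hS_psd : (M * Fave).PosSemidef := by
    rw [hSe]
    exact psd_sum ρ (fun r => (hρ r).le) _ (fun r => M_sub_MPM_psd (hC r) hM (hP r))
  have hMsum : M = ∑ r, ρ r • M := by rw [← Finset.sum_smul, hρsum, one_smul]
  have hMSe : M - M * Fave = ∑ r, ρ r • (M * P r * M) := by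
    rw [hSe]
    nth_rewrite 1 [hMsum]
    rw [← Finset.sum_sub_distrib]
    exact Finset.sum_congr rfl fun r _ => by rw [← smul_sub, sub_sub_cancel]
  have hMS_psd : (M - M * Fave).PosSemidef := by
    rw [hMSe]
    exact psd_sum ρ (fun r => (hρ r).le) _ (fun r => MPM_psd hM (hP r))
  have key : ∀ lam : ℂ, IsEigenvalue Fave lam → ∃ q : ℝ, 0 ≤ q ∧ q ≤ 1 ∧ lam = (q : ℂ) :=
    fun lam h => key_eig hM hS_psd hMS_psd rfl h
  refine ⟨?_, ?_, ?_⟩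
  · -- (a)
    intro lam hl
    obtain ⟨q, h0, h1, rfl⟩ := key lam hl
    exact ⟨Complex.ofReal_im q, by rw [Complex.norm_of_nonneg h0]; exact h1⟩
  · -- (b)
    have hb : ∀ r, (fun _ => (1:ℝ)) ᵥ* (F r) = fun _ => (1:ℝ) := by
      intro r
      rw [hF r, Matrix.vecMul_sub, Matrix.vecMul_one, ← Matrix.vecMul_vecMul,
        one_vecMul_P (hC r) hM (hP r), Matrix.zero_vecMul, sub_zero]
    rw [hFave, vecMul_sum']
    have : ∀ r, (fun _ => (1:ℝ)) ᵥ* (ρ r • F r) = ρ r • (fun _ => (1:ℝ)) := by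
      intro r; rw [vecMul_smulMat, hb r]
    rw [Finset.sum_congr rfl fun r _ => this r]
    funext i
    simp only [Finset.sum_apply, Pi.smul_apply, smul_eq_mul, mul_one]
    exact hρsum
  · -- (c)
    intro hspan
    constructor
    · intro x
      constructor
      · intro hx
        set z := M *ᵥ x with hz
        have hquad0 : ∀ r, x ⬝ᵥ (M * P r * M) *ᵥ x = 0 := by
          have h0 : (M - M * Fave) *ᵥ x = 0 := by
            rw [Matrix.sub_mulVec, ← Matrix.mulVec_mulVec, hx, sub_self]
          have h1 : ∑ r, ρ r * (x ⬝ᵥ (M * P r * M) *ᵥ x) = 0 := by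
            have h2 : x ⬝ᵥ (M - M * Fave) *ᵥ x = 0 := by rw [h0, dotProduct_zero]
            rw [hMSe, sum_mulVec'] at h2
            rw [← h2, dot_sum']
            exact Finset.sum_congr rfl fun r _ => by
              rw [smul_mulVec, dotProduct_smul, smul_eq_mul]
          intro r
          have hnn : ∀ s : Fin ℓ, s ∈ Finset.univ →
              0 ≤ ρ s * (x ⬝ᵥ (M * P s * M) *ᵥ x) := by
            intro s _
            have := (MPM_psd hM (hP s)).dotProduct_mulVec_nonneg x
            rw [star_real] at this
            exact mul_nonneg (hρ s).le this
          have := (Finset.sum_eq_zero_iff_of_nonneg hnn).mp h1 r (Finset.mem_univ r)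
          rcases mul_eq_zero.mp this with h | h
          · exact absurd h (hρ r).ne'
          · exact h
        have hPz : ∀ r, P r *ᵥ z = 0 := by
          intro r
          have hq : z ⬝ᵥ (P r) *ᵥ z = 0 := by
            have : x ⬝ᵥ (M * P r * M) *ᵥ x = z ⬝ᵥ (P r) *ᵥ z := by
              rw [← Matrix.mulVec_mulVec, ← Matrix.mulVec_mulVec,
                Matrix.dotProduct_mulVec x M]
              congr 1
              rw [← hMs, Matrix.vecMul_transpose]
            rw [← this, hquad0 r]
          have hiff := (P_psd hM (hP r)).dotProduct_mulVec_zero_iff z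
          rw [star_real] at hiff
          exact hiff.mp hq
        have hΩz : ∀ r, Omega (C r) *ᵥ z = 0 := by
          intro r
          set Ω := Omega (C r) with hΩ
          have hBBP : Ω * M * Ω = (Ω * M * Ω) * (Ω * M * Ω) * P r := by
            calc Ω * M * Ω = (Ω * M * Ω) * P r * (Ω * M * Ω) := (hP r).1.symm
            _ = (Ω * M * Ω) * (P r * (Ω * M * Ω)) := by rw [mul_assoc]
            _ = (Ω * M * Ω) * ((Ω * M * Ω) * P r) := by rw [← BP_comm hM (hP r)]
            _ = (Ω * M * Ω) * (Ω * M * Ω) * P r := by simp only [mul_assoc]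
          have hBz : (Ω * M * Ω) *ᵥ z = 0 := by
            rw [hBBP, ← Matrix.mulVec_mulVec, hPz r, Matrix.mulVec_zero]
          by_contra hne
          have hq : (Ω *ᵥ z) ⬝ᵥ M *ᵥ (Ω *ᵥ z) = 0 := by
            have e1 : (Ω * M * Ω) *ᵥ z = Ω *ᵥ (M *ᵥ (Ω *ᵥ z)) := by
              rw [← Matrix.mulVec_mulVec, ← Matrix.mulVec_mulVec]
            have e2 : z ⬝ᵥ (Ω * M * Ω) *ᵥ z = (Ω *ᵥ z) ⬝ᵥ M *ᵥ (Ω *ᵥ z) := by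
              rw [e1, Matrix.dotProduct_mulVec z Ω, hΩ, vecMul_omega]
            rw [← e2, hBz, dotProduct_zero]
          have := hM.dotProduct_mulVec_pos hne
          rw [star_real] at this
          exact this.ne' hq
        -- orthogonality to the span
        let lz : (Fin m → ℝ) →ₗ[ℝ] ℝ :=
          { toFun := fun u => z ⬝ᵥ u
            map_add' := fun u w => dotProduct_add z u w
            map_smul' := fun c u => by simp [dotProduct_smul] }
        have hle : (⨆ r, LinearMap.range (Omega (C r)).mulVecLin) ≤ LinearMap.ker lz := by
          refine iSup_le fun r => ?_
          rintro u ⟨w, rfl⟩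
          simp only [LinearMap.mem_ker]
          show z ⬝ᵥ (Omega (C r)).mulVecLin w = 0
          rw [Matrix.mulVecLin_apply, Matrix.dotProduct_mulVec, vecMul_omega,
            hΩz r, zero_dotProduct]
        have hm0 : (m : ℝ) ≠ 0 := Nat.cast_ne_zero.mpr (by omega)
        set c0 : ℝ := (∑ i, z i) / (m : ℝ) with hc0
        set y : Fin m → ℝ := z - c0 • (fun _ => (1:ℝ)) with hy
        have hysum : ∑ i, y i = 0 := by
          simp only [hy, Pi.sub_apply, Pi.smul_apply, smul_eq_mul, mul_one,
            Finset.sum_sub_distrib, Finset.sum_const, Finset.card_univ, Fintype.card_fin,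
            nsmul_eq_mul, hc0]
          field_simp
          ring
        have hymem : y ∈ ⨆ r, LinearMap.range (Omega (C r)).mulVecLin := by
          rw [hspan, LinearMap.mem_ker]
          rw [LinearMap.sum_apply]
          simpa [LinearMap.proj_apply] using hysum
        have h1y : z ⬝ᵥ y = 0 := hle hymem
        have h2y : y ⬝ᵥ y = 0 := by
          have hdone : (fun _ => (1:ℝ)) ⬝ᵥ y = 0 := by
            simp only [dotProduct, one_mul]
            exact hysum
          rw [hy, sub_dotProduct, smul_dotProduct, h1y, hdone,
            smul_eq_mul, mul_zero, sub_zero]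
        have hy0 : y = 0 := dotProduct_self_eq_zero.mp h2y
        have hzc : z = c0 • (fun _ => (1:ℝ)) := by
          have := sub_eq_zero.mp (hy ▸ hy0)
          exact this
        refine ⟨c0, ?_⟩
        have hinv : M⁻¹ * M = 1 := Matrix.nonsing_inv_mul M (isUnit_iff_ne_zero.mpr hM.det_pos.ne')
        calc x = (M⁻¹ * M) *ᵥ x := by rw [hinv, Matrix.one_mulVec]
        _ = M⁻¹ *ᵥ z := by rw [← Matrix.mulVec_mulVec, ← hz]
        _ = M⁻¹ *ᵥ (c0 • fun _ => (1:ℝ)) := by rw [hzc]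
        _ = c0 • M⁻¹ *ᵥ (fun _ => (1:ℝ)) := Matrix.mulVec_smul M⁻¹ c0 _
      · rintro ⟨c, rfl⟩
        have hinv : M * M⁻¹ = 1 := Matrix.mul_nonsing_inv M (isUnit_iff_ne_zero.mpr hM.det_pos.ne')
        have hw : ∀ r, F r *ᵥ (M⁻¹ *ᵥ (fun _ => (1:ℝ))) = M⁻¹ *ᵥ (fun _ => (1:ℝ)) := by
          intro r
          rw [hF r, Matrix.sub_mulVec, Matrix.one_mulVec]
          have h1 : (P r * M) *ᵥ (M⁻¹ *ᵥ fun _ => (1:ℝ)) = 0 := by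
            rw [Matrix.mulVec_mulVec, mul_assoc, hinv, mul_one,
              P_mulVec_one (hC r) hM (hP r)]
          rw [h1, sub_zero]
        rw [Matrix.mulVec_smul, hFave, sum_mulVec']
        have : ∀ r, (ρ r • F r) *ᵥ (M⁻¹ *ᵥ fun _ => (1:ℝ))
            = ρ r • (M⁻¹ *ᵥ fun _ => (1:ℝ)) := by
          intro r; rw [smul_mulVec, hw r]
        rw [Finset.sum_congr rfl fun r _ => this r, ← Finset.sum_smul, hρsum, one_smul]
    · intro lam hl hne
      obtain ⟨q, h0, h1, rfl⟩ := key lam hl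
      have hq1 : q ≠ 1 := fun h => hne (by rw [h]; norm_num)
      rw [Complex.norm_of_nonneg h0]
      exact lt_of_le_of_ne h1 hq1
end
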